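/- Let E be a Banach lattice satisfying the property (d) and let A be a norm bounded solid subset of E. Then the following are equivalent: (1) A is almost limited; (2) f_n(x_n) → 0 for every disjoint sequence (x_n) contained in A ∩ E⁺ and every disjoint weak* null sequence (f_n) in E*; (3) f_n(x_n) → 0 for every disjoint sequence (x_n) contained in A ∩ E⁺ and every disjoint weak* null sequence (f_n) consisting of positive functionals in E*. -/

import Mathlib

open Filter Topology Metric Pointwise

/-- The value `|f| x` of the modulus of a continuous linear functional at a positive
element `x`, given by the Riesz–Kantorovich formula `|f| x = sup { f u : |u| ≤ x }`. -/
noncomputable def absFunctional {E : Type*} [NormedAddCommGroup E] [Lattice E] [IsOrderedAddMonoid E] [HasSolidNorm E] [NormedSpace ℝ E]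
    (f : E →L[ℝ] ℝ) (x : E) : ℝ :=
  sSup ((fun u => f u) '' {u : E | |u| ≤ x})

/-- Two functionals `f, g` on a Banach lattice are (lattice) disjoint: `|f| ⊓ |g| = 0`,
expressed via the Riesz–Kantorovich formula for the infimum of the positive functionals
`|f|` and `|g|`. -/
def DualDisjoint {E : Type*} [NormedAddCommGroup E] [Lattice E] [IsOrderedAddMonoid E] [HasSolidNorm E] [NormedSpace ℝ E]
    (f g : E →L[ℝ] ℝ) : Prop :=
  ∀ x : E, 0 ≤ x → ∀ ε : ℝ, 0 < ε →
    ∃ y : E, 0 ≤ y ∧ y ≤ x ∧ absFunctional f y + absFunctional g (x - y) < ε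

/-- A sequence of functionals is disjoint if any two distinct terms are lattice disjoint. -/
def DualDisjointSeq {E : Type*} [NormedAddCommGroup E] [Lattice E] [IsOrderedAddMonoid E] [HasSolidNorm E] [NormedSpace ℝ E]
    (f : ℕ → E →L[ℝ] ℝ) : Prop :=
  ∀ m k, m ≠ k → DualDisjoint (f m) (f k)

/-- A sequence of functionals is weak* null if it converges to `0` pointwise. -/
def WeakStarNull {E : Type*} [NormedAddCommGroup E] [NormedSpace ℝ E]
    (f : ℕ → E →L[ℝ] ℝ) : Prop :=
  ∀ x : E, Tendsto (fun n => f n x) atTop (𝓝 (0 : ℝ))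

/-- The sequence `(|f n|)` of moduli is weak* null (it suffices to test on positive
elements since `|f n|` is additive and every element is a difference of positives). -/
def AbsWeakStarNull {E : Type*} [NormedAddCommGroup E] [Lattice E] [IsOrderedAddMonoid E] [HasSolidNorm E] [NormedSpace ℝ E]
    (f : ℕ → E →L[ℝ] ℝ) : Prop :=
  ∀ x : E, 0 ≤ x → Tendsto (fun n => absFunctional (f n) x) atTop (𝓝 (0 : ℝ))

/-- A functional is positive if it is nonnegative on the positive cone. -/
def PositiveFunctional {E : Type*} [NormedAddCommGroup E] [Lattice E] [IsOrderedAddMonoid E] [HasSolidNorm E] [NormedSpace ℝ E]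
    (f : E →L[ℝ] ℝ) : Prop :=
  ∀ x : E, 0 ≤ x → 0 ≤ f x

/-- A norm bounded set `A` is almost limited if every disjoint weak* null sequence of
functionals converges to `0` uniformly on `A`. -/
def AlmostLimitedSet {E : Type*} [NormedAddCommGroup E] [Lattice E] [IsOrderedAddMonoid E] [HasSolidNorm E] [NormedSpace ℝ E]
    (A : Set E) : Prop :=
  Bornology.IsBounded A ∧
    ∀ f : ℕ → E →L[ℝ] ℝ, DualDisjointSeq f → WeakStarNull f →
      TendstoUniformlyOn (fun n x => f n x) (fun _ => (0 : ℝ)) atTop A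

/-- A norm bounded set `A` in a Banach space is limited if every weak* null sequence of
functionals converges to `0` uniformly on `A`. -/
def LimitedSet {X : Type*} [NormedAddCommGroup X] [NormedSpace ℝ X] (A : Set X) : Prop :=
  Bornology.IsBounded A ∧
    ∀ f : ℕ → X →L[ℝ] ℝ, WeakStarNull f →
      TendstoUniformlyOn (fun n x => f n x) (fun _ => (0 : ℝ)) atTop A

/-- Property (d): for every disjoint weak* null sequence `(f n)`, `(|f n|)` is weak* null. -/
def PropertyD (E : Type*) [NormedAddCommGroup E] [Lattice E] [IsOrderedAddMonoid E] [HasSolidNorm E] [NormedSpace ℝ E] : Prop :=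
  ∀ f : ℕ → E →L[ℝ] ℝ, DualDisjointSeq f → WeakStarNull f → AbsWeakStarNull f

/-- The lattice operations of the dual are weak* sequentially continuous: for every
weak* null sequence `(f n)`, `(|f n|)` is weak* null. -/
def DualLatticeWeakStarSeqCont (E : Type*) [NormedAddCommGroup E] [Lattice E] [IsOrderedAddMonoid E] [HasSolidNorm E]
    [NormedSpace ℝ E] : Prop :=
  ∀ f : ℕ → E →L[ℝ] ℝ, WeakStarNull f → AbsWeakStarNull f

/-- A sequence in a Banach lattice is disjoint if the moduli of distinct terms meet at 0. -/
def LatticeDisjointSeq {E : Type*} [NormedAddCommGroup E] [Lattice E] [IsOrderedAddMonoid E] [HasSolidNorm E] (x : ℕ → E) : Prop :=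
  ∀ m k, m ≠ k → |x m| ⊓ |x k| = 0

/-- A sequence is weakly null if `f (x n) → 0` for every continuous linear functional. -/
def WeaklyNull {E : Type*} [NormedAddCommGroup E] [NormedSpace ℝ E] (x : ℕ → E) : Prop :=
  ∀ f : E →L[ℝ] ℝ, Tendsto (fun n => f (x n)) atTop (𝓝 (0 : ℝ))

/-- A set is solid if `x ∈ A` and `|y| ≤ |x|` imply `y ∈ A`. -/
def IsSolid {E : Type*} [NormedAddCommGroup E] [Lattice E] [IsOrderedAddMonoid E] [HasSolidNorm E] (A : Set E) : Prop :=
  ∀ x ∈ A, ∀ y : E, |y| ≤ |x| → y ∈ A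

/-- The solid hull of a set. -/
def solidHull {E : Type*} [NormedAddCommGroup E] [Lattice E] [IsOrderedAddMonoid E] [HasSolidNorm E] (A : Set E) : Set E :=
  {y | ∃ x ∈ A, |y| ≤ |x|}

/-- A set is almost order bounded if for every `ε > 0` it is contained in
`[-u, u] + ε B_E` for some positive `u`. -/
def AlmostOrderBounded {E : Type*} [NormedAddCommGroup E] [Lattice E] [IsOrderedAddMonoid E] [HasSolidNorm E] (A : Set E) : Prop :=
  ∀ ε : ℝ, 0 < ε → ∃ u : E, 0 ≤ u ∧ A ⊆ Set.Icc (-u) u + Metric.closedBall (0 : E) ε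

/-- σ-Dedekind completeness: every countable nonempty set bounded above has a supremum. -/
def SigmaDedekindComplete (E : Type*) [NormedAddCommGroup E] [Lattice E] [IsOrderedAddMonoid E] [HasSolidNorm E] : Prop :=
  ∀ s : Set E, s.Countable → s.Nonempty → BddAbove s → ∃ b : E, IsLUB s b

/-- A set is relatively weakly compact if its closure in the weak topology is compact. -/
def RelativelyWeaklyCompact {E : Type*} [NormedAddCommGroup E] [NormedSpace ℝ E]
    (A : Set E) : Prop :=
  IsCompact (closure ((toWeakSpace ℝ E) '' A))

/-- The weak Dunford–Pettis* property: every relatively weakly compact set is almost limited. -/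
def WDPStar (E : Type*) [NormedAddCommGroup E] [Lattice E] [IsOrderedAddMonoid E] [HasSolidNorm E] [NormedSpace ℝ E] : Prop :=
  ∀ A : Set E, RelativelyWeaklyCompact A → AlmostLimitedSet A

/-- The bi-sequence property: for each disjoint weakly null sequence in the positive cone
and each weak* null sequence of positive functionals, `f n (x n) → 0`. -/
def BiSequenceProperty (E : Type*) [NormedAddCommGroup E] [Lattice E] [IsOrderedAddMonoid E] [HasSolidNorm E] [NormedSpace ℝ E] : Prop :=
  ∀ x : ℕ → E, (∀ n, 0 ≤ x n) → LatticeDisjointSeq x → WeaklyNull x →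
    ∀ f : ℕ → E →L[ℝ] ℝ, (∀ n, PositiveFunctional (f n)) → WeakStarNull f →
      Tendsto (fun n => f n (x n)) atTop (𝓝 (0 : ℝ))

/-- The dual Schur property: every disjoint weak* null sequence of functionals is norm null. -/
def DualSchur (E : Type*) [NormedAddCommGroup E] [Lattice E] [IsOrderedAddMonoid E] [HasSolidNorm E] [NormedSpace ℝ E] : Prop :=
  ∀ f : ℕ → E →L[ℝ] ℝ, DualDisjointSeq f → WeakStarNull f →
    Tendsto (fun n => ‖f n‖) atTop (𝓝 (0 : ℝ))

/-- The dual positive Schur property: every weak* null sequence of positive functionals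
is norm null. -/
def DualPositiveSchur (E : Type*) [NormedAddCommGroup E] [Lattice E] [IsOrderedAddMonoid E] [HasSolidNorm E] [NormedSpace ℝ E] : Prop :=
  ∀ f : ℕ → E →L[ℝ] ℝ, (∀ n, PositiveFunctional (f n)) → WeakStarNull f →
    Tendsto (fun n => ‖f n‖) atTop (𝓝 (0 : ℝ))

/-- The norm of a Banach lattice is order continuous: every net decreasing to `0`
converges to `0` in norm. -/
def OrderContinuousNorm (E : Type*) [NormedAddCommGroup E] [Lattice E] [IsOrderedAddMonoid E] [HasSolidNorm E] : Prop :=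
  ∀ {ι : Type*} [Preorder ι] [IsDirected ι (· ≤ ·)] [Nonempty ι] (x : ι → E),
    Antitone x → IsGLB (Set.range x) 0 → Tendsto (fun i => ‖x i‖) atTop (𝓝 (0 : ℝ))

/-- The norm of the dual Banach lattice is order continuous: every net of functionals
decreasing to `0` (in the dual order, i.e., pointwise on the positive cone, with greatest
lower bound `0`) converges to `0` in norm. -/
def DualOrderContinuousNorm (E : Type*) [NormedAddCommGroup E] [Lattice E] [IsOrderedAddMonoid E] [HasSolidNorm E]
    [NormedSpace ℝ E] : Prop :=
  ∀ {ι : Type*} [Preorder ι] [IsDirected ι (· ≤ ·)] [Nonempty ι] (f : ι → E →L[ℝ] ℝ),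
    (∀ i j, i ≤ j → ∀ x : E, 0 ≤ x → f j x ≤ f i x) →
    (∀ i, PositiveFunctional (f i)) →
    (∀ g : E →L[ℝ] ℝ, (∀ i, ∀ x : E, 0 ≤ x → g x ≤ f i x) → ∀ x : E, 0 ≤ x → g x ≤ 0) →
    Tendsto (fun i => ‖f i‖) atTop (𝓝 (0 : ℝ))

/-- A norm bounded set `A` is L-weakly compact if every disjoint sequence in its solid
hull is norm null. -/
def LWeaklyCompactSet {E : Type*} [NormedAddCommGroup E] [Lattice E] [IsOrderedAddMonoid E] [HasSolidNorm E] (A : Set E) : Prop :=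
  Bornology.IsBounded A ∧
    ∀ y : ℕ → E, (∀ n, y n ∈ solidHull A) → LatticeDisjointSeq y →
      Tendsto (fun n => ‖y n‖) atTop (𝓝 (0 : ℝ))

/-- An atom of a Banach lattice. -/
def IsLatticeAtom {E : Type*} [NormedAddCommGroup E] [Lattice E] [IsOrderedAddMonoid E] [HasSolidNorm E] (a : E) : Prop :=
  0 < a ∧ ∀ x y : E, 0 ≤ x → x ≤ a → 0 ≤ y → y ≤ a → x ⊓ y = 0 → x = 0 ∨ y = 0

/-- A Banach lattice is discrete (atomic) if the band generated by its atoms is the whole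
lattice; equivalently, the only element disjoint from all atoms is `0`. -/
def DiscreteBanachLattice (E : Type*) [NormedAddCommGroup E] [Lattice E] [IsOrderedAddMonoid E] [HasSolidNorm E] : Prop :=
  ∀ x : E, (∀ a : E, IsLatticeAtom a → |x| ⊓ a = 0) → x = 0

/-- A linear operator between Banach lattices is order bounded if it maps order intervals
into order intervals. -/
def OrderBoundedOperator {E F : Type*} [NormedAddCommGroup E] [Lattice E] [IsOrderedAddMonoid E] [HasSolidNorm E] [NormedSpace ℝ E]
    [NormedAddCommGroup F] [Lattice F] [IsOrderedAddMonoid F] [HasSolidNorm F] [NormedSpace ℝ F] (T : E →ₗ[ℝ] F) : Prop :=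
  ∀ a b : E, ∃ c d : F, T '' Set.Icc a b ⊆ Set.Icc c d


section SmulAux
variable {E : Type*} [NormedAddCommGroup E] [Lattice E] [IsOrderedAddMonoid E] [HasSolidNorm E] [NormedSpace ℝ E]

lemma al_two_posPart (a : E) : (a + a)⁺ = a⁺ + a⁺ := by
  have h2 : a ≤ (a + a) ⊔ 0 := by
    rw [← sub_nonneg, sup_sub, add_sub_cancel_right, zero_sub]
    exact abs_nonneg a
  rw [posPart_def, posPart_def]
  apply le_antisymm
  · rw [sup_le_iff]
    exact ⟨add_le_add le_sup_left le_sup_left, add_nonneg le_sup_right le_sup_right⟩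
  · calc (a ⊔ 0) + (a ⊔ 0) = ((a ⊔ 0) + a) ⊔ ((a ⊔ 0) + 0) := add_sup _ _ _
      _ ≤ (a + a) ⊔ 0 := by
        apply sup_le
        · rw [sup_add, zero_add]
          exact sup_le le_sup_left h2
        · rw [add_zero]
          exact sup_le h2 le_sup_right

lemma al_nonneg_of_add_self {y : E} (h : 0 ≤ y + y) : 0 ≤ y := by
  have h1 : (-y)⁺ + (-y)⁺ = 0 := by
    rw [← al_two_posPart, ← neg_add, posPart_neg, negPart_eq_zero.2 h]
  have h2 : (-y)⁺ = 0 := by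
    refine le_antisymm ?_ (posPart_nonneg _)
    calc (-y)⁺ ≤ (-y)⁺ + (-y)⁺ := le_add_of_nonneg_right (posPart_nonneg _)
      _ = 0 := h1
  exact neg_nonpos.1 (posPart_eq_zero.1 h2)

lemma al_nonneg_of_pow_smul {y : E} : ∀ n : ℕ, 0 ≤ (2^n : ℕ) • y → 0 ≤ y := by
  intro n
  induction n generalizing y with
  | zero => simpa using id
  | succ n ih =>
    intro h
    have : (2^(n+1) : ℕ) • y = (2^n : ℕ) • (y + y) := by
      rw [← two_nsmul, ← mul_nsmul', pow_succ]
    rw [this] at h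
    exact al_nonneg_of_add_self (ih h)

lemma al_smul_nonneg {c : ℝ} {x : E} (hc : 0 ≤ c) (hx : 0 ≤ x) : 0 ≤ c • x := by
  have key : ∀ n : ℕ, 0 ≤ ((⌊c * 2^n⌋₊ : ℝ) / 2^n) • x := by
    intro n
    apply al_nonneg_of_pow_smul n
    rw [← Nat.cast_smul_eq_nsmul ℝ, smul_smul]
    have h2 : ((2:ℝ)^n) ≠ 0 := by positivity
    have he : ((2^n : ℕ) : ℝ) * ((⌊c * 2^n⌋₊ : ℝ) / 2^n) = (⌊c * 2^n⌋₊ : ℝ) := by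
      push_cast
      field_simp
    rw [he, Nat.cast_smul_eq_nsmul]
    exact nsmul_nonneg hx _
  have hlim : Tendsto (fun n : ℕ => ((⌊c * 2^n⌋₊ : ℝ) / 2^n)) atTop (𝓝 c) := by
    have hg : Tendsto (fun n : ℕ => c - (1/2:ℝ)^n) atTop (𝓝 c) := by
      have := tendsto_pow_atTop_nhds_zero_of_lt_one (by norm_num : (0:ℝ) ≤ 1/2)
        (by norm_num : (1/2:ℝ) < 1)
      simpa using tendsto_const_nhds.sub this
    refine tendsto_of_tendsto_of_tendsto_of_le_of_le hg tendsto_const_nhds ?_ ?_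
    · intro n
      have hn : (0:ℝ) < 2^n := by positivity
      have h1 : c * 2^n < (⌊c * 2^n⌋₊ : ℝ) + 1 := Nat.lt_floor_add_one _
      have h3 : c < ((⌊c * 2^n⌋₊ : ℝ) + 1) / 2^n := (lt_div_iff₀ hn).2 h1
      have h4 : ((⌊c * 2^n⌋₊ : ℝ) + 1) / 2^n = (⌊c * 2^n⌋₊ : ℝ) / 2^n + (1/2:ℝ)^n := by
        rw [add_div, div_pow]
        norm_num
      linarith [h3, h4.le]
    · intro n
      have hn : (0:ℝ) < 2^n := by positivity
      exact (div_le_iff₀ hn).2 (Nat.floor_le (by positivity))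
  have hsm : Tendsto (fun n : ℕ => ((⌊c * 2^n⌋₊ : ℝ) / 2^n) • x) atTop (𝓝 (c • x)) :=
    hlim.smul tendsto_const_nhds
  exact le_of_tendsto_of_tendsto' tendsto_const_nhds hsm key

lemma al_smul_le_smul {c : ℝ} {x y : E} (hc : 0 ≤ c) (h : x ≤ y) : c • x ≤ c • y := by
  rw [← sub_nonneg, ← smul_sub]
  exact al_smul_nonneg hc (sub_nonneg.2 h)

lemma al_posPart_smul {c : ℝ} (hc : 0 ≤ c) (x : E) : (c • x)⁺ = c • x⁺ := by
  have le1 : ∀ (d : ℝ), 0 ≤ d → ∀ z : E, (d • z)⁺ ≤ d • z⁺ := by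
    intro d hd z
    rw [posPart_def]
    exact sup_le (al_smul_le_smul hd (le_posPart z)) (al_smul_nonneg hd (posPart_nonneg z))
  rcases eq_or_lt_of_le hc with rfl | hc'
  · simp
  · refine le_antisymm (le1 c hc x) ?_
    have h2 := le1 c⁻¹ (by positivity) (c • x)
    rw [inv_smul_smul₀ (ne_of_gt hc')] at h2
    have h3 := al_smul_le_smul hc (h2)
    rwa [smul_inv_smul₀ (ne_of_gt hc')] at h3

lemma al_le_self_smul {c : ℝ} (hc : 1 ≤ c) {z : E} (hz : 0 ≤ z) : z ≤ c • z := by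
  have : c • z - z = (c - 1) • z := by rw [sub_smul, one_smul]
  rw [← sub_nonneg, this]
  exact al_smul_nonneg (by linarith) hz

lemma al_disjoint_pair {P Q : E} (h : P + Q ≤ 0) : P⁺ ⊓ Q⁺ = 0 := by
  have hQ : Q ≤ -P := by
    calc Q = (P + Q) - P := by abel
    _ ≤ 0 - P := sub_le_sub_right h P
    _ = -P := zero_sub P
  apply le_antisymm
  · have h1 : Q⁺ ≤ P⁻ := by rw [← posPart_neg]; exact posPart_mono hQ
    exact le_trans (inf_le_inf_left _ h1) (posPart_inf_negPart_eq_zero P).le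
  · exact le_inf (posPart_nonneg _) (posPart_nonneg _)

lemma al_disjoint_seq (u : ℕ → E) (hu : ∀ n, 0 ≤ u n) (w : E) (hw0 : 0 ≤ w)
    (hw : ∀ n, u n ≤ (2:ℝ)^n • w) {j k : ℕ} (hjk : j < k) :
    (u (j+1) - (4:ℝ)^j • (∑ i ∈ Finset.range (j+1), u i) - (2⁻¹:ℝ)^j • w)⁺ ⊓
    (u (k+1) - (4:ℝ)^k • (∑ i ∈ Finset.range (k+1), u i) - (2⁻¹:ℝ)^k • w)⁺ = 0 := by
  set Sj := ∑ i ∈ Finset.range (j+1), u i with hSjdef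
  set Sk := ∑ i ∈ Finset.range (k+1), u i with hSkdef
  have hSj : 0 ≤ Sj := Finset.sum_nonneg fun i _ => hu i
  have hSk1 : u (j+1) ≤ Sk :=
    Finset.single_le_sum (f := u) (fun i _ => hu i) (Finset.mem_range.2 (by omega))
  set P : E := (4:ℝ)^k • (u (j+1) - (2⁻¹:ℝ)^j • w) with hPdef
  set Q : E := (2:ℝ)^(k+1) • w - (4:ℝ)^k • u (j+1) with hQdef
  have hyj : (u (j+1) - (4:ℝ)^j • Sj - (2⁻¹:ℝ)^j • w)⁺ ≤ P⁺ := by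
    have h1 : u (j+1) - (4:ℝ)^j • Sj - (2⁻¹:ℝ)^j • w ≤ u (j+1) - (2⁻¹:ℝ)^j • w := by
      have h0 : 0 ≤ (4:ℝ)^j • Sj := al_smul_nonneg (by positivity) hSj
      exact sub_le_sub_right (sub_le_self _ h0) _
    calc (u (j+1) - (4:ℝ)^j • Sj - (2⁻¹:ℝ)^j • w)⁺ ≤ (u (j+1) - (2⁻¹:ℝ)^j • w)⁺ :=
          posPart_mono h1
      _ ≤ (4:ℝ)^k • (u (j+1) - (2⁻¹:ℝ)^j • w)⁺ :=
          al_le_self_smul (one_le_pow₀ (by norm_num)) (posPart_nonneg _)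
      _ = P⁺ := by rw [hPdef, al_posPart_smul (by positivity)]
  have hyk : (u (k+1) - (4:ℝ)^k • Sk - (2⁻¹:ℝ)^k • w)⁺ ≤ Q⁺ := by
    apply posPart_mono
    have h3 : (4:ℝ)^k • u (j+1) ≤ (4:ℝ)^k • Sk := al_smul_le_smul (by positivity) hSk1
    have h4 : 0 ≤ (2⁻¹:ℝ)^k • w := al_smul_nonneg (by positivity) hw0
    have h5 : u (k+1) - (4:ℝ)^k • Sk - (2⁻¹:ℝ)^k • w ≤ u (k+1) - (4:ℝ)^k • u (j+1) := by
      have := sub_le_sub_left h3 (u (k+1))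
      have h6 : u (k+1) - (4:ℝ)^k • Sk - (2⁻¹:ℝ)^k • w ≤ u (k+1) - (4:ℝ)^k • Sk :=
        sub_le_self _ h4
      exact h6.trans this
    exact h5.trans (sub_le_sub_right (hw (k+1)) _)
  have hcoef : (2:ℝ)^(k+1) ≤ (4:ℝ)^k * (2⁻¹:ℝ)^j := by
    have h7 : (4:ℝ)^k * (2⁻¹:ℝ)^j = (2:ℝ)^(2*k) / (2:ℝ)^j := by
      rw [inv_pow, ← div_eq_mul_inv, pow_mul]
      norm_num
    rw [h7, le_div_iff₀ (by positivity), ← pow_add]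
    exact pow_le_pow_right₀ one_le_two (by omega)
  have hPQ : P + Q ≤ 0 := by
    have hPQ' : P + Q = ((2:ℝ)^(k+1) - (4:ℝ)^k * (2⁻¹:ℝ)^j) • w := by
      rw [hPdef, hQdef, smul_sub, sub_smul, smul_smul]
      abel
    rw [hPQ']
    have hc0 : (0:ℝ) ≤ -((2:ℝ)^(k+1) - (4:ℝ)^k * (2⁻¹:ℝ)^j) := by linarith
    have h8 := al_smul_nonneg hc0 hw0
    rw [neg_smul] at h8
    exact neg_nonneg.1 h8
  refine le_antisymm (le_trans (inf_le_inf hyj hyk) (al_disjoint_pair hPQ).le)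
    (le_inf (posPart_nonneg _) (posPart_nonneg _))

end SmulAux

section AbsFAux
variable {E : Type*} [NormedAddCommGroup E] [Lattice E] [IsOrderedAddMonoid E] [HasSolidNorm E] [NormedSpace ℝ E]

lemma al_absF_bdd (f : E →L[ℝ] ℝ) {x : E} (hx : 0 ≤ x) :
    BddAbove ((fun u => f u) '' {u : E | |u| ≤ x}) := by
  refine ⟨‖f‖ * ‖x‖, ?_⟩
  rintro s ⟨u, hu, rfl⟩
  have h1 : ‖u‖ ≤ ‖x‖ := by
    apply norm_le_norm_of_abs_le_abs
    rwa [abs_of_nonneg hx]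
  calc f u ≤ ‖f u‖ := le_abs_self _
    _ ≤ ‖f‖ * ‖u‖ := f.le_opNorm u
    _ ≤ ‖f‖ * ‖x‖ := by
      have := norm_nonneg f
      nlinarith [norm_nonneg u]

lemma al_absF_ne (f : E →L[ℝ] ℝ) {x : E} (hx : 0 ≤ x) :
    ((fun u => f u) '' {u : E | |u| ≤ x}).Nonempty :=
  ⟨f 0, ⟨0, by simpa using hx, rfl⟩⟩

lemma al_le_absF (f : E →L[ℝ] ℝ) {x v : E} (hx : 0 ≤ x) (hv : |v| ≤ x) :
    f v ≤ absFunctional f x :=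
  le_csSup (al_absF_bdd f hx) ⟨v, hv, rfl⟩

lemma al_absF_nonneg (f : E →L[ℝ] ℝ) {x : E} (hx : 0 ≤ x) : 0 ≤ absFunctional f x := by
  have := al_le_absF f hx (v := 0) (by simpa using hx)
  simpa using this

lemma al_absF_le (f : E →L[ℝ] ℝ) {x : E} (hx : 0 ≤ x) : absFunctional f x ≤ ‖f‖ * ‖x‖ := by
  apply csSup_le (al_absF_ne f hx)
  rintro s ⟨u, hu, rfl⟩
  have h1 : ‖u‖ ≤ ‖x‖ := by
    apply norm_le_norm_of_abs_le_abs
    rwa [abs_of_nonneg hx]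
  calc f u ≤ ‖f u‖ := le_abs_self _
    _ ≤ ‖f‖ * ‖u‖ := f.le_opNorm u
    _ ≤ ‖f‖ * ‖x‖ := by nlinarith [norm_nonneg f, norm_nonneg u]

lemma al_absF_mono (f : E →L[ℝ] ℝ) {x y : E} (hx : 0 ≤ x) (hxy : x ≤ y) :
    absFunctional f x ≤ absFunctional f y := by
  apply csSup_le (al_absF_ne f hx)
  rintro s ⟨u, hu, rfl⟩
  exact al_le_absF f (hx.trans hxy) (le_trans hu hxy)

lemma al_abs_le_absF (f : E →L[ℝ] ℝ) (v : E) : |f v| ≤ absFunctional f |v| := by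
  rw [abs_le]
  constructor
  · rw [neg_le, ← map_neg]
    exact al_le_absF f (abs_nonneg v) (by rw [abs_neg])
  · exact al_le_absF f (abs_nonneg v) le_rfl

lemma al_absF_zero (f : E →L[ℝ] ℝ) : absFunctional f 0 = 0 := by
  apply le_antisymm
  · apply csSup_le (al_absF_ne f le_rfl)
    rintro s ⟨u, hu, rfl⟩
    have : u = 0 := by
      have h0 : |u| ≤ |(0:E)| := by simpa using hu
      have h1 := norm_le_norm_of_abs_le_abs h0
      rw [norm_zero] at h1
      exact norm_le_zero_iff.1 h1
    simp [this]
  · exact al_absF_nonneg f le_rfl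

/-- Riesz decomposition. -/
lemma al_riesz_decomp {x y w : E} (hx : 0 ≤ x) (hy : 0 ≤ y) (hw : |w| ≤ x + y) :
    ∃ u v : E, w = u + v ∧ |u| ≤ x ∧ |v| ≤ y := by
  have hwle := (abs_le'.1 hw)
  obtain ⟨hw1, hw2⟩ := hwle   -- w ≤ x + y, -w ≤ x + y
  set u : E := (w ⊓ x) ⊔ (-x) with hu
  refine ⟨u, w - u, by abel, ?_, ?_⟩
  · rw [abs_le']
    constructor
    · exact sup_le (inf_le_right) (neg_le_self hx)
    · rw [neg_sup, neg_neg]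
      exact inf_le_right
  · have hv : w - u = (0 ⊔ (w - x)) ⊓ (w + x) := by
      rw [hu, sub_sup, sub_inf, sub_self, sub_neg_eq_add]
    rw [abs_le', hv]
    constructor
    · calc (0 ⊔ (w - x)) ⊓ (w + x) ≤ 0 ⊔ (w - x) := inf_le_left
        _ ≤ 0 ⊔ ((x + y) - x) := sup_le_sup_left (sub_le_sub_right hw1 x) 0
        _ = y := by rw [add_sub_cancel_left, sup_eq_right.2 hy]
    · rw [neg_inf]
      apply sup_le
      · have h9 : (0:E) ≤ 0 ⊔ (w - x) := le_sup_left
        calc -(0 ⊔ (w - x)) ≤ 0 := neg_nonpos.2 h9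
          _ ≤ y := hy
      · have h10 : -(w + x) = -w - x := by abel
        rw [h10]
        calc -w - x ≤ (x + y) - x := sub_le_sub_right hw2 x
          _ = y := by abel

lemma al_absF_add (f : E →L[ℝ] ℝ) {x y : E} (hx : 0 ≤ x) (hy : 0 ≤ y) :
    absFunctional f (x + y) = absFunctional f x + absFunctional f y := by
  have hxy : (0:E) ≤ x + y := add_nonneg hx hy
  apply le_antisymm
  · apply csSup_le (al_absF_ne f hxy)
    rintro s ⟨wv, hwv, rfl⟩
    obtain ⟨u, v, rfl, hu, hv⟩ := al_riesz_decomp hx hy hwv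
    show f (u + v) ≤ _
    rw [map_add]
    exact add_le_add (al_le_absF f hx hu) (al_le_absF f hy hv)
  · rw [← sub_nonneg]
    have h1 : absFunctional f x ≤ absFunctional f (x + y) - absFunctional f y := by
      apply csSup_le (al_absF_ne f hx)
      rintro s ⟨u, hu, rfl⟩
      rw [le_sub_iff_add_le, add_comm]
      have h2 : absFunctional f y ≤ absFunctional f (x + y) - f u := by
        apply csSup_le (al_absF_ne f hy)
        rintro t ⟨v, hv, rfl⟩
        rw [le_sub_iff_add_le, add_comm, ← map_add]
        apply al_le_absF f hxy
        calc |u + v| ≤ |u| + |v| := abs_add_le u v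
          _ ≤ x + y := add_le_add hu hv
      linarith
    linarith

end AbsFAux

section ModAux
variable {E : Type*} [NormedAddCommGroup E] [Lattice E] [IsOrderedAddMonoid E] [HasSolidNorm E] [NormedSpace ℝ E]

lemma al_posPart_le_abs (a : E) : a⁺ ≤ |a| :=
  sup_le (le_abs_self a) (abs_nonneg a)

lemma al_negPart_le_abs (a : E) : a⁻ ≤ |a| :=
  sup_le (neg_le_abs a) (abs_nonneg a)

noncomputable def alQ (f : E →L[ℝ] ℝ) (x : E) : ℝ :=
  absFunctional f x⁺ - absFunctional f x⁻

lemma alQ_add (f : E →L[ℝ] ℝ) (x y : E) : alQ f (x + y) = alQ f x + alQ f y := by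
  have hx' : x⁺ = x + x⁻ := eq_add_of_sub_eq (posPart_sub_negPart x)
  have hy' : y⁺ = y + y⁻ := eq_add_of_sub_eq (posPart_sub_negPart y)
  have hxy' : (x + y)⁺ = (x + y) + (x + y)⁻ := eq_add_of_sub_eq (posPart_sub_negPart (x + y))
  have key : (x + y)⁺ + (x⁻ + y⁻) = (x + y)⁻ + (x⁺ + y⁺) := by
    rw [hx', hy', hxy']; abel
  have e1 : absFunctional f ((x + y)⁺ + (x⁻ + y⁻)) =
      absFunctional f (x + y)⁺ + (absFunctional f x⁻ + absFunctional f y⁻) := by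
    rw [al_absF_add f (posPart_nonneg _) (add_nonneg (negPart_nonneg _) (negPart_nonneg _)),
      al_absF_add f (negPart_nonneg _) (negPart_nonneg _)]
  have e2 : absFunctional f ((x + y)⁻ + (x⁺ + y⁺)) =
      absFunctional f (x + y)⁻ + (absFunctional f x⁺ + absFunctional f y⁺) := by
    rw [al_absF_add f (negPart_nonneg _) (add_nonneg (posPart_nonneg _) (posPart_nonneg _)),
      al_absF_add f (posPart_nonneg _) (posPart_nonneg _)]
  have e3 : absFunctional f ((x + y)⁺ + (x⁻ + y⁻)) =
      absFunctional f ((x + y)⁻ + (x⁺ + y⁺)) := by rw [key]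
  unfold alQ
  linarith [e1, e2, e3]

lemma alQ_bound (f : E →L[ℝ] ℝ) (z : E) : |alQ f z| ≤ ‖f‖ * ‖z‖ := by
  have hp : absFunctional f z⁺ ≤ ‖f‖ * ‖z‖ := by
    refine (al_absF_le f (posPart_nonneg _)).trans ?_
    have h1 : ‖z⁺‖ ≤ ‖z‖ := by
      apply norm_le_norm_of_abs_le_abs
      rw [abs_of_nonneg (posPart_nonneg z)]
      exact al_posPart_le_abs z
    nlinarith [norm_nonneg f]
  have hn : absFunctional f z⁻ ≤ ‖f‖ * ‖z‖ := by
    refine (al_absF_le f (negPart_nonneg _)).trans ?_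
    have h1 : ‖z⁻‖ ≤ ‖z‖ := by
      apply norm_le_norm_of_abs_le_abs
      rw [abs_of_nonneg (negPart_nonneg z)]
      exact al_negPart_le_abs z
    nlinarith [norm_nonneg f]
  have h2 := al_absF_nonneg f (posPart_nonneg z)
  have h3 := al_absF_nonneg f (negPart_nonneg z)
  unfold alQ
  rw [abs_le]
  constructor <;> linarith

noncomputable def alMod (f : E →L[ℝ] ℝ) : E →L[ℝ] ℝ :=
  AddMonoidHom.toRealLinearMap (AddMonoidHom.mk' (alQ f) (alQ_add f))
    (by
      have hlip : LipschitzWith ‖f‖₊ (alQ f) := by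
        apply LipschitzWith.of_dist_le_mul
        intro a b
        have hq : alQ f a - alQ f b = alQ f (a - b) := by
          have h := alQ_add f (a - b) b
          rw [sub_add_cancel] at h
          linarith
        rw [Real.dist_eq, hq, dist_eq_norm, coe_nnnorm]
        exact alQ_bound f (a - b)
      exact hlip.continuous)

lemma alMod_apply (f : E →L[ℝ] ℝ) (x : E) :
    alMod f x = absFunctional f x⁺ - absFunctional f x⁻ := rfl

lemma alMod_of_nonneg (f : E →L[ℝ] ℝ) {x : E} (hx : 0 ≤ x) :
    alMod f x = absFunctional f x := by
  rw [alMod_apply, posPart_eq_self.2 hx, negPart_eq_zero.2 hx, al_absF_zero, sub_zero]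

lemma alMod_nonneg (f : E →L[ℝ] ℝ) {x : E} (hx : 0 ≤ x) : 0 ≤ alMod f x := by
  rw [alMod_of_nonneg f hx]
  exact al_absF_nonneg f hx

lemma alMod_mono (f : E →L[ℝ] ℝ) {a b : E} (h : a ≤ b) : alMod f a ≤ alMod f b := by
  have h1 := alMod_nonneg f (sub_nonneg.2 h)
  rw [map_sub] at h1
  linarith

lemma al_absF_alMod (f : E →L[ℝ] ℝ) {y : E} (hy : 0 ≤ y) :
    absFunctional (alMod f) y = absFunctional f y := by
  apply le_antisymm
  · apply csSup_le (al_absF_ne _ hy)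
    rintro s ⟨u, hu, rfl⟩
    show alMod f u ≤ _
    have h1 : alMod f u ≤ absFunctional f u⁺ := by
      rw [alMod_apply]
      have := al_absF_nonneg f (negPart_nonneg u)
      linarith
    have h2 : absFunctional f u⁺ ≤ absFunctional f y :=
      al_absF_mono f (posPart_nonneg u) ((al_posPart_le_abs u).trans hu)
    linarith
  · rw [← alMod_of_nonneg f hy]
    exact al_le_absF (alMod f) hy (by rw [abs_of_nonneg hy])

lemma al_abs_le_alMod (f : E →L[ℝ] ℝ) (v : E) : |f v| ≤ alMod f |v| := by
  rw [alMod_of_nonneg f (abs_nonneg v)]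
  exact al_abs_le_absF f v

end ModAux

section SelAux
variable {E : Type*} [NormedAddCommGroup E] [Lattice E] [IsOrderedAddMonoid E] [HasSolidNorm E] [NormedSpace ℝ E]

lemma al_select (g : ℕ → E →L[ℝ] ℝ) (z : ℕ → E) (δ : ℕ → ℝ) (hδ : ∀ j, 0 < δ j)
    (hsel : ∀ (k0 : ℕ) (S : E) (d : ℝ), 0 < d → ∃ k', k0 < k' ∧ (g k') S < d) :
    ∃ m : ℕ → ℕ, StrictMono m ∧
      ∀ j, (g (m (j+1))) (∑ i ∈ Finset.range (j+1), z (m i)) < δ j := by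
  let step : ℕ → ℕ × E → ℕ × E := fun j prev =>
    ⟨(hsel prev.1 prev.2 (δ j) (hδ j)).choose,
      prev.2 + z (hsel prev.1 prev.2 (δ j) (hδ j)).choose⟩
  let F : ℕ → ℕ × E := fun j => Nat.rec (⟨0, z 0⟩ : ℕ × E) step j
  have hFsucc : ∀ j, F (j+1) = step j (F j) := fun j => rfl
  set m : ℕ → ℕ := fun j => (F j).1 with hm
  have hsum : ∀ j, (F j).2 = ∑ i ∈ Finset.range (j+1), z (m i) := by
    intro j
    induction j with
    | zero => simp [F, m]
    | succ j ih =>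
      rw [Finset.sum_range_succ, ← ih, hFsucc j]
  have hmono : StrictMono m := by
    apply strictMono_nat_of_lt_succ
    intro j
    exact (hsel (F j).1 (F j).2 (δ j) (hδ j)).choose_spec.1
  refine ⟨m, hmono, fun j => ?_⟩
  have hspec := (hsel (F j).1 (F j).2 (δ j) (hδ j)).choose_spec.2
  rw [← hsum j]
  exact hspec

end SelAux

/-- For a Banach lattice `E` with property (d) and a norm bounded solid set
`A ⊆ E`, TFAE: (1) `A` is almost limited; (2) `f n (x n) → 0` for every disjoint sequence
`(x n)` in `A ∩ E⁺` and every disjoint weak* null `(f n)` in `E*`; (3) the same with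
`(f n)` positive. -/
theorem statement11 {E : Type*} [NormedAddCommGroup E] [Lattice E] [IsOrderedAddMonoid E] [HasSolidNorm E] [NormedSpace ℝ E]
    [CompleteSpace E] (hd : PropertyD E)
    (A : Set E) (hAb : Bornology.IsBounded A) (hAs : IsSolid A) :
    List.TFAE
      [AlmostLimitedSet A,
       ∀ x : ℕ → E, (∀ n, x n ∈ A) → (∀ n, 0 ≤ x n) → LatticeDisjointSeq x →
         ∀ f : ℕ → E →L[ℝ] ℝ, DualDisjointSeq f → WeakStarNull f →
           Filter.Tendsto (fun n => f n (x n)) Filter.atTop (nhds (0 : ℝ)),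
       ∀ x : ℕ → E, (∀ n, x n ∈ A) → (∀ n, 0 ≤ x n) → LatticeDisjointSeq x →
         ∀ f : ℕ → E →L[ℝ] ℝ, (∀ n, PositiveFunctional (f n)) → DualDisjointSeq f →
           WeakStarNull f →
             Filter.Tendsto (fun n => f n (x n)) Filter.atTop (nhds (0 : ℝ))] := by
  tfae_have 1 → 2 := by
    intro h1 x hxA _ _ f hfd hfn
    have hT := h1.2 f hfd hfn
    rw [Metric.tendstoUniformlyOn_iff] at hT
    rw [NormedAddCommGroup.tendsto_nhds_zero]
    intro ε hε
    filter_upwards [hT ε hε] with n hn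
    have h2 := hn (x n) (hxA n)
    rwa [dist_comm, dist_zero_right] at h2
  tfae_have 2 → 3 := by
    intro h2 x hxA hx0 hxd f _ hfd hfn
    exact h2 x hxA hx0 hxd f hfd hfn
  tfae_have 3 → 1 := by
    intro h3
    refine ⟨hAb, ?_⟩
    intro f hfd hfn
    by_contra hcon
    rw [Metric.tendstoUniformlyOn_iff] at hcon
    push_neg at hcon
    obtain ⟨ε, hε, hnot⟩ := hcon
    have hfreq : ∃ᶠ n in atTop, ∃ x, x ∈ A ∧ ε ≤ dist 0 (f n x) := by
      refine hnot.mono ?_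
      intro n hn
      exact hn
    obtain ⟨φ, hφ, hP⟩ := Filter.extraction_of_frequently_atTop hfreq
    choose xs hxsA hxs using hP
    have hz0 : ∀ k, (0:E) ≤ |xs k| := fun k => abs_nonneg _
    have hzA : ∀ k, |xs k| ∈ A := fun k =>
      hAs (xs k) (hxsA k) |xs k| (by rw [abs_abs])
    have hgz : ∀ k, ε ≤ alMod (f (φ k)) |xs k| := by
      intro k
      have h1 := hxs k
      rw [dist_zero_left] at h1
      calc ε ≤ ‖f (φ k) (xs k)‖ := h1
        _ = |f (φ k) (xs k)| := Real.norm_eq_abs _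
        _ ≤ alMod (f (φ k)) |xs k| := al_abs_le_alMod _ _
    have hgpos : ∀ k (x : E), 0 ≤ x → 0 ≤ alMod (f (φ k)) x := fun k x hx => alMod_nonneg _ hx
    have habs : AbsWeakStarNull f := hd f hfd hfn
    have hφt : Tendsto φ atTop atTop := hφ.tendsto_atTop
    have hgnull : ∀ x : E, Tendsto (fun k => alMod (f (φ k)) x) atTop (𝓝 0) := by
      intro x
      have h1 := habs x⁺ (posPart_nonneg x)
      have h2 := habs x⁻ (negPart_nonneg x)
      have h3' : Tendsto (fun n => absFunctional (f n) x⁺ - absFunctional (f n) x⁻)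
          atTop (𝓝 0) := by simpa using h1.sub h2
      have h4 := h3'.comp hφt
      simpa [alMod_apply, Function.comp_def] using h4
    have hgd : ∀ a b, a ≠ b → DualDisjoint (alMod (f (φ a))) (alMod (f (φ b))) := by
      intro a b hab x hx ε' hε'
      obtain ⟨y, hy0, hyx, hlt⟩ := hfd (φ a) (φ b) (fun hh => hab (hφ.injective hh)) x hx ε' hε'
      refine ⟨y, hy0, hyx, ?_⟩
      rw [al_absF_alMod _ hy0, al_absF_alMod _ (sub_nonneg.2 hyx)]
      exact hlt
    obtain ⟨M, hM⟩ := isBounded_iff_forall_norm_le.1 hAb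
    have hselhyp : ∀ (k0 : ℕ) (S : E) (d : ℝ), 0 < d →
        ∃ k', k0 < k' ∧ alMod (f (φ k')) S < d := by
      intro k0 S d hdpos
      have h1 := NormedAddCommGroup.tendsto_nhds_zero.1 (hgnull S) d hdpos
      obtain ⟨k', hk1, hk2⟩ := (h1.and (Filter.eventually_gt_atTop k0)).exists
      refine ⟨k', hk2, ?_⟩
      calc alMod (f (φ k')) S ≤ |alMod (f (φ k')) S| := le_abs_self _
        _ = ‖alMod (f (φ k')) S‖ := (Real.norm_eq_abs _).symm
        _ < d := hk1
    obtain ⟨m, hmono, hmsel⟩ := al_select (fun k => alMod (f (φ k))) (fun k => |xs k|)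
      (fun j => ε/(4*4^j)) (fun j => by positivity) hselhyp
    set u : ℕ → E := fun i => |xs (m i)| with hu
    have hu0 : ∀ i, 0 ≤ u i := fun i => abs_nonneg _
    have huA : ∀ i, u i ∈ A := fun i => hzA (m i)
    have hsummable : Summable (fun i => (2⁻¹:ℝ)^i • u i) := by
      apply Summable.of_norm_bounded (g := fun i => (2⁻¹:ℝ)^i * M)
      · exact (summable_geometric_of_lt_one (by norm_num) (by norm_num)).mul_right M
      · intro i
        rw [norm_smul, Real.norm_eq_abs, abs_pow]
        have h5 : ‖u i‖ ≤ M := hM (u i) (huA i)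
        have h6 : (0:ℝ) ≤ (2⁻¹:ℝ)^i := by positivity
        rw [abs_of_nonneg (by norm_num : (0:ℝ) ≤ 2⁻¹)]
        nlinarith [norm_nonneg (u i)]
    set w : E := ∑' i, (2⁻¹:ℝ)^i • u i with hwdef
    have hw0 : 0 ≤ w := tsum_nonneg (fun i => al_smul_nonneg (by positivity) (hu0 i))
    have hwle : ∀ i, u i ≤ (2:ℝ)^i • w := by
      intro i
      have h6 : (2⁻¹:ℝ)^i • u i ≤ w :=
        Summable.le_tsum hsummable i (fun j _ => al_smul_nonneg (by positivity) (hu0 j))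
      have h7 := al_smul_le_smul (show (0:ℝ) ≤ 2^i by positivity) h6
      rwa [smul_smul, ← mul_pow, (by norm_num : (2:ℝ) * 2⁻¹ = 1), one_pow, one_smul] at h7
    set y : ℕ → E := fun j =>
      (u (j+1) - (4:ℝ)^j • (∑ i ∈ Finset.range (j+1), u i) - (2⁻¹:ℝ)^j • w)⁺ with hy
    have hy0 : ∀ j, 0 ≤ y j := fun j => posPart_nonneg _
    have hyleu : ∀ j, y j ≤ u (j+1) := by
      intro j
      rw [hy]
      simp only []
      rw [posPart_def]
      apply sup_le ?_ (hu0 (j+1))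
      have h8 : 0 ≤ (4:ℝ)^j • (∑ i ∈ Finset.range (j+1), u i) :=
        al_smul_nonneg (by positivity) (Finset.sum_nonneg fun i _ => hu0 i)
      have h9 : 0 ≤ (2⁻¹:ℝ)^j • w := al_smul_nonneg (by positivity) hw0
      calc u (j+1) - (4:ℝ)^j • (∑ i ∈ Finset.range (j+1), u i) - (2⁻¹:ℝ)^j • w
          ≤ u (j+1) - (4:ℝ)^j • (∑ i ∈ Finset.range (j+1), u i) := sub_le_self _ h9
        _ ≤ u (j+1) := sub_le_self _ h8
    have hyA : ∀ j, y j ∈ A := by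
      intro j
      apply hAs (u (j+1)) (huA (j+1)) (y j)
      rw [abs_of_nonneg (hy0 j), abs_of_nonneg (hu0 (j+1))]
      exact hyleu j
    have hyd : LatticeDisjointSeq y := by
      intro a b hab
      rw [abs_of_nonneg (hy0 a), abs_of_nonneg (hy0 b)]
      rcases lt_or_gt_of_ne hab with h | h
      · exact al_disjoint_seq u hu0 w hw0 hwle h
      · rw [inf_comm]
        exact al_disjoint_seq u hu0 w hw0 hwle h
    have hm1 : StrictMono (fun j => m (j+1)) := fun a b h => hmono (Nat.succ_lt_succ h)
    have hffpos : ∀ j, PositiveFunctional (alMod (f (φ (m (j+1))))) :=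
      fun j x hx => hgpos _ x hx
    have hffd : DualDisjointSeq (fun j => alMod (f (φ (m (j+1))))) := by
      intro a b hab
      exact hgd (m (a+1)) (m (b+1)) (fun hh => hab (by
        have := hmono.injective hh
        omega))
    have hffnull : WeakStarNull (fun j => alMod (f (φ (m (j+1))))) := by
      intro x
      have := (hgnull x).comp hm1.tendsto_atTop
      simpa [Function.comp_def] using this
    have hmain := h3 y hyA hy0 hyd (fun j => alMod (f (φ (m (j+1))))) hffpos hffd hffnull
    have hcw : Tendsto (fun j => alMod (f (φ (m (j+1)))) w) atTop (𝓝 0) := by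
      have := (hgnull w).comp hm1.tendsto_atTop
      simpa [Function.comp_def] using this
    have hcw0 : ∀ j, 0 ≤ alMod (f (φ (m (j+1)))) w := fun j => hgpos _ w hw0
    have hd2 : Tendsto (fun j => (2⁻¹:ℝ)^j * alMod (f (φ (m (j+1)))) w) atTop (𝓝 0) := by
      refine tendsto_of_tendsto_of_tendsto_of_le_of_le tendsto_const_nhds hcw ?_ ?_
      · intro j
        have := hcw0 j
        positivity
      · intro j
        have h10 : (2⁻¹:ℝ)^j ≤ 1 := pow_le_one₀ (by norm_num) (by norm_num)
        nlinarith [hcw0 j]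
    have hlow : ∀ j, ε - ε/4 - (2⁻¹:ℝ)^j * alMod (f (φ (m (j+1)))) w
        ≤ alMod (f (φ (m (j+1)))) (y j) := by
      intro j
      have h8 : (u (j+1) - (4:ℝ)^j • (∑ i ∈ Finset.range (j+1), u i) - (2⁻¹:ℝ)^j • w) ≤ y j :=
        le_posPart _
      have h9 := alMod_mono (f (φ (m (j+1)))) h8
      have h10 : alMod (f (φ (m (j+1))))
            (u (j+1) - (4:ℝ)^j • (∑ i ∈ Finset.range (j+1), u i) - (2⁻¹:ℝ)^j • w)
          = alMod (f (φ (m (j+1)))) (u (j+1))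
            - (4:ℝ)^j * alMod (f (φ (m (j+1)))) (∑ i ∈ Finset.range (j+1), u i)
            - (2⁻¹:ℝ)^j * alMod (f (φ (m (j+1)))) w := by
        rw [map_sub, map_sub, map_smul, map_smul, smul_eq_mul, smul_eq_mul]
      have h11 : ε ≤ alMod (f (φ (m (j+1)))) (u (j+1)) := hgz (m (j+1))
      have h13 : alMod (f (φ (m (j+1)))) (∑ i ∈ Finset.range (j+1), u i) < ε/(4*4^j) := by
        have := hmsel j
        simpa [hu] using this
      have h14 : (4:ℝ)^j * alMod (f (φ (m (j+1)))) (∑ i ∈ Finset.range (j+1), u i) ≤ ε/4 := by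
        have hp4 : (0:ℝ) < 4^j := by positivity
        have h15 : (4:ℝ)^j * (ε/(4*4^j)) = ε/4 := by
          field_simp
        nlinarith [h13]
      linarith [h9, h10.symm.le, h10.le]
    have hlim : Tendsto (fun j => ε - ε/4 - (2⁻¹:ℝ)^j * alMod (f (φ (m (j+1)))) w)
        atTop (𝓝 (ε - ε/4 - 0)) := tendsto_const_nhds.sub hd2
    have hcontra := le_of_tendsto_of_tendsto' hlim hmain hlow
    linarith
  tfae_finish
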